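/- Let B be a real symmetric N×N matrix with smallest eigenvalue λ_min > 0, let γ > 0 be a constant, let T₀ ∈ ℝ, and let F : ℝ × ℝ^N → ℝ^N satisfy a Lipschitz condition with respect to the second variable with constant 𝓛 > 0, where 𝓛 < γ·λ_min. Let x : ℝ → ℝ^N and x₀ : ℝ → ℝ be such that ε(t) := x(t) − x₀(t)·𝟙 is C¹ on [T₀,∞) and satisfies ε′(t) = F(t, x(t)) − F(t, x₀(t)·𝟙) − γ·(B·ε(t)) for all t ≥ T₀. Then ‖ε(t)‖ ≤ ‖ε(T₀)‖·e^{−(γ·λ_min − 𝓛)·(t−T₀)} for all t ≥ T₀, and consequently ‖ε(t)‖ → 0 as t → ∞. -/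

import Mathlib

open Filter Set Real

/-- Quadratic form lower bound for a Hermitian matrix via its smallest eigenvalue. -/
lemma quad_lower_bound {N : ℕ} (B : Matrix (Fin N) (Fin N) ℝ) (hB : B.IsHermitian)
    (lmin : ℝ) (hmin_le : ∀ i, lmin ≤ hB.eigenvalues i)
    (v : EuclideanSpace ℝ (Fin N)) :
    lmin * ‖v‖ ^ 2 ≤ inner ℝ v (Matrix.toEuclideanCLM (𝕜 := ℝ) (n := Fin N) B v) := by
  set T := Matrix.toEuclideanCLM (𝕜 := ℝ) (n := Fin N) B with hT
  have hsymm : ∀ a b : EuclideanSpace ℝ (Fin N), inner ℝ (T a) b = (inner ℝ a (T b) : ℝ) := by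
    intro a b
    have := Matrix.isHermitian_iff_isSymmetric.1 hB
    have h1 : ∀ z : EuclideanSpace ℝ (Fin N), T z = Matrix.toEuclideanLin B z := by
      intro z
      rw [hT, ← Matrix.coe_toEuclideanCLM_eq_toEuclideanLin]
      rfl
    rw [h1, h1]
    exact this a b
  set e := hB.eigenvectorBasis with he
  have hTei : ∀ i, T (e i) = hB.eigenvalues i • e i := by
    intro i
    apply (WithLp.equiv 2 _).injective
    rw [hT, WithLp.equiv_apply, Matrix.ofLp_toEuclideanCLM]
    have := hB.mulVec_eigenvectorBasis i
    simpa using this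
  have key : (inner ℝ v (T v) : ℝ) = ∑ i, hB.eigenvalues i * (inner ℝ v (e i) : ℝ) ^ 2 := by
    rw [← e.sum_inner_mul_inner v (T v)]
    congr 1
    ext i
    have : (inner ℝ (e i) (T v) : ℝ) = inner ℝ (T (e i)) v := (hsymm (e i) v).symm
    rw [this, hTei i, real_inner_smul_left, real_inner_comm (e i) v]
    ring
  have parseval : ∑ i, (inner ℝ v (e i) : ℝ) ^ 2 = ‖v‖ ^ 2 := by
    have := e.sum_inner_mul_inner v v
    rw [real_inner_self_eq_norm_sq] at this
    rw [← this]
    congr 1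
    ext i
    rw [sq, real_inner_comm (e i) v]
  rw [key, ← parseval, Finset.mul_sum]
  apply Finset.sum_le_sum
  intro i _
  exact mul_le_mul_of_nonneg_right (hmin_le i) (sq_nonneg _)

theorem stmt7 {N : ℕ} (hN : 0 < N) (B : Matrix (Fin N) (Fin N) ℝ)
    (hB : B.IsHermitian) (lmin : ℝ)
    (hmin_le : ∀ i, lmin ≤ hB.eigenvalues i)
    (hmin_mem : ∃ i, hB.eigenvalues i = lmin)
    (hlmin_pos : 0 < lmin)
    (γ : ℝ) (hγ : 0 < γ) (T₀ : ℝ)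
    (F : ℝ → EuclideanSpace ℝ (Fin N) → EuclideanSpace ℝ (Fin N))
    (L : ℝ) (hL : 0 < L) (hLlt : L < γ * lmin)
    (hFLip : ∀ t x y, ‖F t x - F t y‖ ≤ L * ‖x - y‖)
    (ones : EuclideanSpace ℝ (Fin N)) (hones : ∀ i, ones i = 1)
    (x : ℝ → EuclideanSpace ℝ (Fin N)) (x₀ : ℝ → ℝ)
    (ε : ℝ → EuclideanSpace ℝ (Fin N)) (hε : ∀ t, ε t = x t - x₀ t • ones)
    (hC1 : ContDiffOn ℝ 1 ε (Set.Ici T₀))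
    (hode : ∀ t, T₀ ≤ t →
      HasDerivAt ε
        (F t (x t) - F t (x₀ t • ones)
          - γ • (Matrix.toEuclideanCLM (𝕜 := ℝ) (n := Fin N) B (ε t))) t) :
    (∀ t, T₀ ≤ t →
      ‖ε t‖ ≤ ‖ε T₀‖ * Real.exp (-(γ * lmin - L) * (t - T₀))) ∧
    Filter.Tendsto (fun t => ‖ε t‖) Filter.atTop (nhds 0) := by
  set k := γ * lmin - L with hk
  have hkpos : 0 < k := by simp [hk]; linarith
  set d : ℝ → EuclideanSpace ℝ (Fin N) := fun t =>
    F t (x t) - F t (x₀ t • ones)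
      - γ • (Matrix.toEuclideanCLM (𝕜 := ℝ) (n := Fin N) B (ε t)) with hd
  -- derivative of squared norm
  set g : ℝ → ℝ := fun t => ‖ε t‖ ^ 2 with hg
  have hode' : ∀ t, T₀ ≤ t → HasDerivAt ε (d t) t := hode
  have hg' : ∀ t, T₀ ≤ t → HasDerivAt g (2 * inner ℝ (ε t) (d t)) t := by
    intro t ht
    have h1 : HasDerivAt (fun s => (inner ℝ (ε s) (ε s) : ℝ))
        (inner ℝ (ε t) (d t) + inner ℝ (d t) (ε t)) t :=
      (hode' t ht).inner ℝ (hode' t ht)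
    have h2 : (inner ℝ (ε t) (d t) : ℝ) + inner ℝ (d t) (ε t) = 2 * inner ℝ (ε t) (d t) := by
      rw [real_inner_comm (d t) (ε t)]; ring
    rw [h2] at h1
    convert h1 using 1
    ext s
    rw [hg, real_inner_self_eq_norm_sq]
  -- bound on the derivative
  have hbound : ∀ t, T₀ ≤ t → 2 * (inner ℝ (ε t) (d t) : ℝ) ≤ (-2 * k) * g t := by
    intro t ht
    have hεx : x t - x₀ t • ones = ε t := (hε t).symm
    have h1 : (inner ℝ (ε t) (d t) : ℝ)
        = inner ℝ (ε t) (F t (x t) - F t (x₀ t • ones))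
          - γ * inner ℝ (ε t) (Matrix.toEuclideanCLM (𝕜 := ℝ) (n := Fin N) B (ε t)) := by
      rw [hd]
      simp [inner_sub_right, inner_smul_right]
    have h2 : (inner ℝ (ε t) (F t (x t) - F t (x₀ t • ones)) : ℝ) ≤ L * ‖ε t‖ ^ 2 := by
      calc (inner ℝ (ε t) (F t (x t) - F t (x₀ t • ones)) : ℝ)
          ≤ ‖ε t‖ * ‖F t (x t) - F t (x₀ t • ones)‖ := real_inner_le_norm _ _
        _ ≤ ‖ε t‖ * (L * ‖x t - x₀ t • ones‖) :=
            mul_le_mul_of_nonneg_left (hFLip t _ _) (norm_nonneg _)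
        _ = L * ‖ε t‖ ^ 2 := by rw [hεx]; ring
    have h3 : γ * (lmin * ‖ε t‖ ^ 2)
        ≤ γ * inner ℝ (ε t) (Matrix.toEuclideanCLM (𝕜 := ℝ) (n := Fin N) B (ε t)) :=
      mul_le_mul_of_nonneg_left (quad_lower_bound B hB lmin hmin_le (ε t)) hγ.le
    have : (inner ℝ (ε t) (d t) : ℝ) ≤ (L - γ * lmin) * ‖ε t‖ ^ 2 := by
      rw [h1]; nlinarith
    have hgt : g t = ‖ε t‖ ^ 2 := rfl
    rw [hgt, hk]
    nlinarith
  -- Gronwall on [T₀, b]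
  have hmain : ∀ t, T₀ ≤ t → ‖ε t‖ ≤ ‖ε T₀‖ * Real.exp (-k * (t - T₀)) := by
    intro b hb
    have hcont : ContinuousOn g (Set.Icc T₀ b) := by
      intro s hs
      exact ((hg' s hs.1).continuousAt).continuousWithinAt
    have hgb := le_gronwallBound_of_liminf_deriv_right_le (f := g)
      (f' := fun t => 2 * inner ℝ (ε t) (d t)) (δ := g T₀) (K := -2 * k) (ε := 0)
      (a := T₀) (b := b) hcont
      (fun s hs r hr => by
        have := ((hg' s hs.1).hasDerivWithinAt (s := Set.Ici s)).liminf_right_slope_le hr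
        refine this.mono fun z hz => ?_
        rwa [slope_def_field, div_eq_inv_mul] at hz)
      le_rfl
      (fun s hs => by simpa using hbound s hs.1)
      b ⟨hb, le_rfl⟩
    rw [gronwallBound_ε0] at hgb
    have hgb' : ‖ε b‖ ^ 2 ≤ (‖ε T₀‖ * Real.exp (-k * (b - T₀))) ^ 2 := by
      have : (‖ε T₀‖ * Real.exp (-k * (b - T₀))) ^ 2
          = ‖ε T₀‖ ^ 2 * Real.exp (-2 * k * (b - T₀)) := by
        rw [mul_pow, ← Real.exp_nat_mul]
        ring_nf
      rw [this]
      exact hgb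
    have h0 : 0 ≤ ‖ε T₀‖ * Real.exp (-k * (b - T₀)) :=
      mul_nonneg (norm_nonneg _) (Real.exp_pos _).le
    nlinarith [norm_nonneg (ε b)]
  constructor
  · exact fun t ht => by simpa [neg_sub] using hmain t ht
  · have hlim : Tendsto (fun t : ℝ => ‖ε T₀‖ * Real.exp (-k * (t - T₀))) atTop (nhds 0) := by
      have h0 : Tendsto (fun t : ℝ => t - T₀) atTop atTop :=
        tendsto_atTop_add_const_right atTop (-T₀) tendsto_id
      have h1 : Tendsto (fun t : ℝ => -k * (t - T₀)) atTop atBot :=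
        h0.const_mul_atTop_of_neg (by linarith)
      have h2 : Tendsto (fun t : ℝ => Real.exp (-k * (t - T₀))) atTop (nhds 0) :=
        Real.tendsto_exp_atBot.comp h1
      simpa using h2.const_mul (‖ε T₀‖)
    refine tendsto_of_tendsto_of_tendsto_of_le_of_le' tendsto_const_nhds hlim ?_ ?_
    · exact Eventually.of_forall fun t => norm_nonneg _
    · filter_upwards [eventually_ge_atTop T₀] with t ht
      exact hmain t ht
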